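/- In ℝ², let E₁ = {(y₁,y₂) : (10y₁)² + (y₂/10)² < 1} (the ellipse diag(1/10,10)·𝔹) and E₂ = 𝔹 the open unit disc, both of area π. Then for every measurable measure-preserving map φ : E₁ → E₂ (i.e. the pushforward under φ of Lebesgue measure restricted to E₁ equals Lebesgue measure restricted to E₂), one has ⨍_{E₁} |P₁(φ(y) − y)|² dy ≤ 1.21 and ⨍_{E₁} |P₂(φ(y) − y)|² dy ≥ 16(2/3 − √3/(2π)); in particular ⨍_{E₁} |P₁(φ(y) − y)|² dy < ⨍_{E₁} |P₂(φ(y) − y)|² dy. -/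

import Mathlib

open MeasureTheory Matrix

noncomputable section

abbrev EucSp (n : ℕ) := EuclideanSpace ℝ (Fin n)

/-- Principal square root of a positive semidefinite matrix (zero otherwise). -/
noncomputable def msqrt {n : ℕ} (A : Matrix (Fin n) (Fin n) ℝ) : Matrix (Fin n) (Fin n) ℝ :=
  open scoped Classical in
  if h : A.PosSemidef then
    (h.1.eigenvectorUnitary : Matrix (Fin n) (Fin n) ℝ) *
      Matrix.diagonal ((↑) ∘ Real.sqrt ∘ h.1.eigenvalues) *
      (star (h.1.eigenvectorUnitary : Matrix (Fin n) (Fin n) ℝ))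
  else 0

/-- `A ∈ 𝒜(λ,Λ)`: symmetric and uniformly elliptic. -/
def UnifElliptic {n : ℕ} (lam Lam : ℝ) (A : Matrix (Fin n) (Fin n) ℝ) : Prop :=
  A.IsSymm ∧ ∀ ξ : Fin n → ℝ,
    lam * (ξ ⬝ᵥ ξ) ≤ ξ ⬝ᵥ A.mulVec ξ ∧ ξ ⬝ᵥ A.mulVec ξ ≤ Lam * (ξ ⬝ᵥ ξ)

/-- Membership in the orthogonal group `O(n)`. -/
def IsOrthMat {n : ℕ} (Q : Matrix (Fin n) (Fin n) ℝ) : Prop :=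
  Q * Qᵀ = 1 ∧ Qᵀ * Q = 1

/-- Matrix acting on Euclidean space. -/
noncomputable def mvE {n : ℕ} (M : Matrix (Fin n) (Fin n) ℝ) (y : EucSp n) : EucSp n :=
  (EuclideanSpace.equiv (Fin n) ℝ).symm (M.mulVec ((EuclideanSpace.equiv (Fin n) ℝ) y))

/-- The ellipsoid `x + ε A^{1/2} 𝔹`. -/
noncomputable def ellipsoid {n : ℕ} (ε : ℝ) (M : Matrix (Fin n) (Fin n) ℝ) (x : EucSp n) :
    Set (EucSp n) :=
  (fun y => x + ε • mvE (msqrt M) y) '' Metric.ball (0 : EucSp n) 1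

/-- The matrix `J_α = diag(α-1, 1, …, 1)`. -/
noncomputable def Jmat (n : ℕ) (α : ℝ) : Matrix (Fin n) (Fin n) ℝ :=
  Matrix.diagonal (fun i => if (i : ℕ) = 0 then α - 1 else 1)

/-- Reflection in the first coordinate axis. -/
noncomputable def J0 (n : ℕ) : Matrix (Fin n) (Fin n) ℝ :=
  Matrix.diagonal (fun i => if (i : ℕ) = 0 then -1 else 1)

/-- The first standard basis vector `e₁`. -/
noncomputable def e1 (n : ℕ) : EucSp n :=
  (EuclideanSpace.equiv (Fin n) ℝ).symm (fun i => if (i : ℕ) = 0 then 1 else 0)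

/-- `f₁(x,z) = C|x-z|^α + C̃|x+z|²`. -/
noncomputable def f1 {n : ℕ} (α C Ct : ℝ) (x z : EucSp n) : ℝ :=
  C * ‖x - z‖ ^ α + Ct * ‖x + z‖ ^ 2

/-- The annular step function `f₂`. -/
noncomputable def f2 {n : ℕ} (α C lam ε : ℝ) (N : ℕ) (x z : EucSp n) : ℝ :=
  if ‖x - z‖ / (Real.sqrt lam * ε) > (N : ℝ) then 0
  else C ^ (2 * (2 * N - ⌈2 * ‖x - z‖ / (Real.sqrt lam * ε)⌉₊)) * ε ^ α


/-- The ellipse `diag(1/10,10)·𝔹` in `ℝ²`. -/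
def ellipseE1 : Set (EucSp 2) :=
  {y | (10 * y 0) ^ 2 + (y 1 / 10) ^ 2 < 1}

/-- The open unit disc in `ℝ²`. -/
def discE2 : Set (EucSp 2) :=
  Metric.ball (0 : EucSp 2) 1

noncomputable def h1f (x : ℝ) : ℝ := 20 * Real.sqrt (1 - (10*x)^2)
noncomputable def h2f (x : ℝ) : ℝ := max (20 * Real.sqrt (1 - (10*x)^2) - 10) 0

def S1 : Set (ℝ × ℝ) := {p | (10*p.1)^2 + (p.2/10)^2 < 1}
def S2 : Set (ℝ × ℝ) := {p | ((10*p.1)^2 + (p.2/10)^2 < 1) ∧ 5 ≤ |p.2|}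

lemma measS1 : MeasurableSet S1 := by
  apply measurableSet_lt (by fun_prop) measurable_const

lemma measS2 : MeasurableSet S2 := by
  have hs : S2 = S1 ∩ {p : ℝ × ℝ | 5 ≤ |p.2|} := rfl
  rw [hs]
  exact measS1.inter (measurableSet_le measurable_const (by fun_prop))

lemma slice1 (x : ℝ) : volume {b : ℝ | (10*x)^2 + (b/10)^2 < 1}
    = ENNReal.ofReal (h1f x) := by
  rcases le_or_gt (1:ℝ) ((10*x)^2) with h | h
  · have he : {b : ℝ | (10*x)^2 + (b/10)^2 < 1} = ∅ := by
      ext b; simp only [Set.mem_setOf_eq, Set.mem_empty_iff_false, iff_false, not_lt]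
      nlinarith [sq_nonneg (b/10)]
    rw [he, measure_empty]
    have : Real.sqrt (1 - (10*x)^2) = 0 := Real.sqrt_eq_zero'.2 (by linarith)
    simp [h1f, this]
  · set r := Real.sqrt (1 - (10*x)^2) with hr
    have hr0 : 0 < r := Real.sqrt_pos.2 (by linarith)
    have hr2 : r^2 = 1 - (10*x)^2 := Real.sq_sqrt (by linarith)
    have he : {b : ℝ | (10*x)^2 + (b/10)^2 < 1} = Set.Ioo (-(10*r)) (10*r) := by
      ext b; simp only [Set.mem_setOf_eq, Set.mem_Ioo]
      constructor
      · intro hb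
        constructor <;> nlinarith [sq_nonneg (b/10 + r), sq_nonneg (b/10 - r)]
      · rintro ⟨hb1, hb2⟩; nlinarith
    rw [he, Real.volume_Ioo]
    congr 1; unfold h1f; ring

lemma slice2 (x : ℝ) : volume {b : ℝ | ((10*x)^2 + (b/10)^2 < 1) ∧ 5 ≤ |b|}
    = ENNReal.ofReal (h2f x) := by
  set r := Real.sqrt (1 - (10*x)^2) with hr
  have hrnn : 0 ≤ r := Real.sqrt_nonneg _
  rcases le_or_gt r (1/2 : ℝ) with h | h
  · have hle : 1 - (10*x)^2 ≤ 1/4 := by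
      by_contra hc
      push_neg at hc
      have : Real.sqrt (1/4) < r := Real.sqrt_lt_sqrt (by norm_num) hc
      rw [show Real.sqrt (1/4:ℝ) = 1/2 by
        rw [show (1/4:ℝ) = (1/2)^2 by norm_num, Real.sqrt_sq]; norm_num] at this
      linarith
    have he : {b : ℝ | ((10*x)^2 + (b/10)^2 < 1) ∧ 5 ≤ |b|} = ∅ := by
      ext b
      simp only [Set.mem_setOf_eq, Set.mem_empty_iff_false, iff_false, not_and, not_le]
      intro hb
      have hb2 : (b/10)^2 < 1/4 := by nlinarith
      have : b^2 < 25 := by nlinarith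
      nlinarith [sq_abs b, abs_nonneg b]
    rw [he, measure_empty]
    have : max (20*r - 10) 0 = 0 := max_eq_right (by linarith)
    simp [h2f, ← hr, this]
  · have hr2 : r^2 = 1 - (10*x)^2 := by
      apply Real.sq_sqrt
      by_contra hc
      push_neg at hc
      have : r = 0 := Real.sqrt_eq_zero'.2 (by linarith)
      linarith
    have he : {b : ℝ | ((10*x)^2 + (b/10)^2 < 1) ∧ 5 ≤ |b|}
        = Set.Ioc (-(10*r)) (-5) ∪ Set.Ico 5 (10*r) := by
      ext b
      simp only [Set.mem_setOf_eq, Set.mem_union, Set.mem_Ioc, Set.mem_Ico]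
      constructor
      · rintro ⟨hb1, hb2⟩
        rcases le_abs.1 hb2 with hb3 | hb3
        · right; exact ⟨hb3, by nlinarith [sq_nonneg (b/10 - r)]⟩
        · left; refine ⟨by nlinarith [sq_nonneg (b/10 + r)], by linarith⟩
      · rintro (⟨hb1, hb2⟩ | ⟨hb1, hb2⟩)
        · refine ⟨by nlinarith, le_abs.2 (Or.inr (by linarith))⟩
        · refine ⟨by nlinarith, le_abs.2 (Or.inl hb1)⟩
    rw [he, measure_union ?_ (measurableSet_Ico), Real.volume_Ioc, Real.volume_Ico]
    · rw [← ENNReal.ofReal_add (by linarith) (by linarith)]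
      have : max (20*r - 10) 0 = 20*r - 10 := max_eq_left (by linarith)
      unfold h2f
      rw [← hr, this]
      congr 1; ring
    · rw [Set.disjoint_left]
      rintro b ⟨_, hb2⟩ ⟨hb3, _⟩
      linarith



noncomputable def Fprim (x : ℝ) : ℝ := (x * Real.sqrt (1 - x^2) + Real.arcsin x) / 2

lemma hasDerivAt_Fprim {x : ℝ} (hx : x^2 < 1) :
    HasDerivAt Fprim (Real.sqrt (1 - x^2)) x := by
  have h1 : (0:ℝ) < 1 - x^2 := by linarith
  have ht : 0 < Real.sqrt (1 - x^2) := Real.sqrt_pos.2 h1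
  have ht2 : Real.sqrt (1 - x^2)^2 = 1 - x^2 := Real.sq_sqrt h1.le
  have hx1 : x ≠ 1 := by rintro rfl; norm_num at hx
  have hx1' : x ≠ -1 := by rintro rfl; norm_num at hx
  have d1 : HasDerivAt (fun y : ℝ => 1 - y^2) (-(2*x)) x := by
    simpa using ((hasDerivAt_pow 2 x).const_sub 1)
  have d2 : HasDerivAt (fun y : ℝ => Real.sqrt (1 - y^2))
      (1 / (2 * Real.sqrt (1 - x^2)) * (-(2*x))) x :=
    (Real.hasDerivAt_sqrt h1.ne').comp x d1
  have d3 : HasDerivAt (fun y : ℝ => y * Real.sqrt (1-y^2))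
      (1 * Real.sqrt (1 - x^2) + x * (1 / (2 * Real.sqrt (1 - x^2)) * (-(2*x)))) x :=
    (hasDerivAt_id x).mul d2
  have d4 : HasDerivAt Real.arcsin (1 / Real.sqrt (1 - x^2)) x :=
    Real.hasDerivAt_arcsin hx1' hx1
  have d5 := (d3.add d4).div_const 2
  refine d5.congr_deriv ?_
  have hne := ht.ne'
  field_simp
  nlinarith [ht2, ht]

lemma sqrt_quarter : Real.sqrt (1/4 : ℝ) = 1/2 := by
  rw [show (1/4:ℝ) = (1/2)^2 by norm_num, Real.sqrt_sq (by norm_num : (0:ℝ) ≤ 1/2)]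

lemma sq_sqrt3 : Real.sqrt 3 ^ 2 = 3 := Real.sq_sqrt (by norm_num)

lemma sqrt3_lt_two : Real.sqrt 3 < 2 := by
  rw [show (2:ℝ) = Real.sqrt 4 by rw [show (4:ℝ) = 2^2 by norm_num, Real.sqrt_sq]; norm_num]
  exact Real.sqrt_lt_sqrt (by norm_num) (by norm_num)

lemma integral_sqrt_seg :
    ∫ x in (-(Real.sqrt 3/2))..(Real.sqrt 3/2), Real.sqrt (1-x^2)
      = Real.sqrt 3/4 + Real.pi/3 := by
  have hs : Real.sqrt 3 / 2 < 1 := by linarith [sqrt3_lt_two]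
  have hsnn : (0:ℝ) ≤ Real.sqrt 3 / 2 := by positivity
  rw [intervalIntegral.integral_eq_sub_of_hasDerivAt (f := Fprim)
    (fun x hx => by
      rw [Set.uIcc_of_le (by linarith)] at hx
      refine hasDerivAt_Fprim ?_
      have h1 := hx.1; have h2 := hx.2
      nlinarith)
    (Continuous.intervalIntegrable (by continuity) _ _)]
  have h14 : 1 - (Real.sqrt 3/2)^2 = 1/4 := by
    rw [div_pow, sq_sqrt3]; norm_num
  have harc : Real.arcsin (Real.sqrt 3/2) = Real.pi/3 := by
    rw [← Real.sin_pi_div_three]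
    exact Real.arcsin_sin (by linarith [Real.pi_pos]) (by linarith [Real.pi_pos])
  have h14' : 1 - (-(Real.sqrt 3/2))^2 = 1/4 := by rw [neg_pow]; simpa using h14
  have harc' : Real.arcsin (-(Real.sqrt 3/2)) = -(Real.pi/3) := by
    rw [Real.arcsin_neg, harc]
  unfold Fprim
  rw [h14, h14', sqrt_quarter, harc, harc']
  ring

lemma h1f_cont : Continuous h1f := by
  unfold h1f; fun_prop

lemma h1f_nonneg (x : ℝ) : 0 ≤ h1f x := by
  unfold h1f; positivity

lemma h1f_zero {x : ℝ} (hx : (1:ℝ) ≤ (10*x)^2) : h1f x = 0 := by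
  unfold h1f
  rw [Real.sqrt_eq_zero'.2 (by linarith)]; ring

lemma h1f_int : Integrable h1f := by
  apply h1f_cont.integrable_of_hasCompactSupport
  apply HasCompactSupport.intro (isCompact_Icc (a := (-(1/10):ℝ)) (b := 1/10))
  intro x hx
  simp only [Set.mem_Icc, not_and_or, not_le] at hx
  apply h1f_zero
  rcases hx with h | h <;> nlinarith

lemma integral_h1f : ∫ x, h1f x = Real.pi := by
  rw [← setIntegral_eq_integral_of_forall_compl_eq_zero
      (s := Set.Ioc (-(1/10):ℝ) (1/10)) (f := h1f) (fun x hx => by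
        simp only [Set.mem_Ioc, not_and_or, not_le, not_lt] at hx
        apply h1f_zero
        rcases hx with h | h <;> nlinarith)]
  rw [← intervalIntegral.integral_of_le (by norm_num : (-(1/10):ℝ) ≤ 1/10)]
  have hcomp := intervalIntegral.integral_comp_mul_left
    (a := (-(1/10):ℝ)) (b := (1/10:ℝ)) (f := fun u => 20 * Real.sqrt (1 - u^2))
    (c := (10:ℝ)) (by norm_num)
  have : (∫ x in (-(1/10):ℝ)..(1/10), h1f x)
      = ∫ x in (-(1/10):ℝ)..(1/10), (fun u => 20 * Real.sqrt (1 - u^2)) (10*x) := rfl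
  rw [this, hcomp]
  norm_num
  rw [integral_sqrt_one_sub_sq]
  ring

lemma integral_h2f : ∫ x, h2f x = 2*Real.pi/3 - Real.sqrt 3/2 := by
  have hc : (0:ℝ) < Real.sqrt 3/20 := by positivity
  have hc2 : (Real.sqrt 3/20)^2 = 3/400 := by rw [div_pow, sq_sqrt3]; norm_num
  have hzero : ∀ x : ℝ, (3:ℝ)/400 ≤ x^2 → h2f x = 0 := by
    intro x hx
    unfold h2f
    apply max_eq_right
    have h1 : 1 - (10*x)^2 ≤ 1/4 := by nlinarith
    have h2 : Real.sqrt (1 - (10*x)^2) ≤ 1/2 := by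
      calc Real.sqrt (1 - (10*x)^2) ≤ Real.sqrt (1/4) := Real.sqrt_le_sqrt h1
      _ = 1/2 := sqrt_quarter
    linarith
  rw [← setIntegral_eq_integral_of_forall_compl_eq_zero
      (s := Set.Ioc (-(Real.sqrt 3/20)) (Real.sqrt 3/20)) (f := h2f) (fun x hx => by
        simp only [Set.mem_Ioc, not_and_or, not_le, not_lt] at hx
        apply hzero
        rcases hx with h | h <;> nlinarith)]
  rw [← intervalIntegral.integral_of_le (by linarith : -(Real.sqrt 3/20) ≤ Real.sqrt 3/20)]
  have heq : (∫ x in (-(Real.sqrt 3/20))..(Real.sqrt 3/20), h2f x)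
      = ∫ x in (-(Real.sqrt 3/20))..(Real.sqrt 3/20), (20 * Real.sqrt (1 - (10*x)^2) - 10) := by
    apply intervalIntegral.integral_congr
    intro x hx
    rw [Set.uIcc_of_le (by linarith)] at hx
    have hx2 : x^2 ≤ 3/400 := by
      obtain ⟨hx1, hx2⟩ := hx; nlinarith
    unfold h2f
    apply max_eq_left
    have h1 : (1:ℝ)/4 ≤ 1 - (10*x)^2 := by nlinarith
    have h2 : (1:ℝ)/2 ≤ Real.sqrt (1 - (10*x)^2) := by
      calc (1:ℝ)/2 = Real.sqrt (1/4) := sqrt_quarter.symm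
      _ ≤ Real.sqrt (1 - (10*x)^2) := Real.sqrt_le_sqrt h1
    linarith
  rw [heq, intervalIntegral.integral_sub (Continuous.intervalIntegrable (by fun_prop) _ _)
    (intervalIntegrable_const)]
  have hcomp := intervalIntegral.integral_comp_mul_left
    (a := -(Real.sqrt 3/20)) (b := (Real.sqrt 3/20)) (f := fun u => 20 * Real.sqrt (1 - u^2))
    (c := (10:ℝ)) (by norm_num)
  have h10a : (10:ℝ) * -(Real.sqrt 3/20) = -(Real.sqrt 3/2) := by ring
  have h10b : (10:ℝ) * (Real.sqrt 3/20) = Real.sqrt 3/2 := by ring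
  rw [h10a, h10b] at hcomp
  have : (∫ x in (-(Real.sqrt 3/20))..(Real.sqrt 3/20), 20 * Real.sqrt (1 - (10*x)^2))
      = ∫ x in (-(Real.sqrt 3/20))..(Real.sqrt 3/20), (fun u => 20 * Real.sqrt (1 - u^2)) (10*x) := rfl
  rw [this, hcomp, intervalIntegral.integral_const_mul, integral_sqrt_seg,
    intervalIntegral.integral_const]
  simp only [smul_eq_mul]
  ring


open Real in
lemma h2f_cont : Continuous h2f := by
  unfold h2f; fun_prop

lemma h2f_nonneg (x : ℝ) : 0 ≤ h2f x := le_max_right _ _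

open Real in
lemma h2f_int : Integrable h2f := by
  apply h2f_cont.integrable_of_hasCompactSupport
  apply HasCompactSupport.intro
    (isCompact_Icc (a := (-(Real.sqrt 3/20):ℝ)) (b := Real.sqrt 3/20))
  intro x hx
  have hc : (0:ℝ) < Real.sqrt 3/20 := by positivity
  have hc2 : (Real.sqrt 3/20)^2 = 3/400 := by rw [div_pow, sq_sqrt3]; norm_num
  simp only [Set.mem_Icc, not_and_or, not_le] at hx
  have hx2 : (3:ℝ)/400 ≤ x^2 := by rcases hx with h | h <;> nlinarith
  unfold h2f
  apply max_eq_right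
  have h1 : 1 - (10*x)^2 ≤ 1/4 := by nlinarith
  have h2 : Real.sqrt (1 - (10*x)^2) ≤ 1/2 := by
    calc Real.sqrt (1 - (10*x)^2) ≤ Real.sqrt (1/4) := Real.sqrt_le_sqrt h1
    _ = 1/2 := sqrt_quarter
  linarith

open Real in
lemma vol_S1 : volume S1 = ENNReal.ofReal π := by
  rw [Measure.volume_eq_prod, Measure.prod_apply measS1]
  have hs : ∀ x : ℝ, (Prod.mk x ⁻¹' S1) = {b : ℝ | (10*x)^2 + (b/10)^2 < 1} := fun _ => rfl
  simp_rw [hs, slice1]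
  rw [← ofReal_integral_eq_lintegral_ofReal h1f_int
    (Filter.Eventually.of_forall h1f_nonneg), integral_h1f]

open Real in
lemma vol_S2 : volume S2 = ENNReal.ofReal (2*π/3 - Real.sqrt 3/2) := by
  rw [Measure.volume_eq_prod, Measure.prod_apply measS2]
  have hs : ∀ x : ℝ, (Prod.mk x ⁻¹' S2)
      = {b : ℝ | ((10*x)^2 + (b/10)^2 < 1) ∧ 5 ≤ |b|} := fun _ => rfl
  simp_rw [hs, slice2]
  rw [← ofReal_integral_eq_lintegral_ofReal h2f_int
    (Filter.Eventually.of_forall h2f_nonneg), integral_h2f]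

lemma measPres : MeasurePreserving (fun y : EucSp 2 => ((y 0, y 1) : ℝ × ℝ)) volume volume := by
  have h := (volume_preserving_finTwoArrow ℝ).comp
    (EuclideanSpace.volume_preserving_symm_measurableEquiv_toLp (Fin 2))
  have he : (⇑(MeasurableEquiv.finTwoArrow) ∘ ⇑(MeasurableEquiv.toLp 2 (Fin 2 → ℝ)).symm)
      = fun y : EucSp 2 => ((y 0, y 1) : ℝ × ℝ) := rfl
  rwa [he] at h

lemma measurable_coord (i : Fin 2) : Measurable fun v : EucSp 2 => v i := by
  have h := (EuclideanSpace.volume_preserving_symm_measurableEquiv_toLp (Fin 2)).measurable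
  exact (measurable_pi_apply (X := fun _ : Fin 2 => ℝ) i).comp h

def SB : Set (EucSp 2) := {y | 5 ≤ |y 1|}

lemma meas_SB : MeasurableSet SB :=
  measurableSet_le measurable_const (measurable_coord 1).abs

lemma coord_sq_le_norm_sq (x : EucSp 2) (i : Fin 2) : (x i)^2 ≤ ‖x‖^2 := by
  rw [EuclideanSpace.norm_eq, Real.sq_sqrt (by positivity)]
  rw [Fin.sum_univ_two]
  simp only [Real.norm_eq_abs, sq_abs]
  fin_cases i
  · simpa using (by nlinarith [sq_nonneg (x 1)] : (x 0)^2 ≤ (x 0)^2 + (x 1)^2)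
  · simpa using (by nlinarith [sq_nonneg (x 0)] : (x 1)^2 ≤ (x 0)^2 + (x 1)^2)


lemma meas_ellipseE1 : MeasurableSet ellipseE1 := by
  apply measurableSet_lt _ measurable_const
  exact ((((measurable_coord 0).const_mul 10).pow_const 2).add
    (((measurable_coord 1).div_const 10).pow_const 2))


open Real in
lemma vol_ellipseE1 : volume ellipseE1 = ENNReal.ofReal π := by
  have h := measPres.measure_preimage measS1.nullMeasurableSet
  have he : (fun y : EucSp 2 => ((y 0, y 1) : ℝ × ℝ)) ⁻¹' S1 = ellipseE1 := rfl
  rw [he, vol_S1] at h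
  exact h


open Real in
lemma vol_ellipseE1_inter : volume (ellipseE1 ∩ SB)
    = ENNReal.ofReal (2*π/3 - Real.sqrt 3/2) := by
  have h := measPres.measure_preimage measS2.nullMeasurableSet
  have he : (fun y : EucSp 2 => ((y 0, y 1) : ℝ × ℝ)) ⁻¹' S2 = ellipseE1 ∩ SB := rfl
  rw [he, vol_S2] at h
  exact h


/-- the two-dimensional counterexample for large distortion
(Section 6.3.1): no measure-preserving coupling works. -/
theorem stmt18 (φ : EucSp 2 → EucSp 2) (hφmeas : Measurable φ)
    (hφmaps : ∀ y ∈ ellipseE1, φ y ∈ discE2)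
    (hφpush : Measure.map φ (volume.restrict ellipseE1) = volume.restrict discE2) :
    (⨍ y in ellipseE1, ((φ y - y) 0) ^ 2) ≤ 1.21 ∧
    (⨍ y in ellipseE1, ((φ y - y) 1) ^ 2) ≥
      16 * (2 / 3 - Real.sqrt 3 / (2 * Real.pi)) ∧
    (⨍ y in ellipseE1, ((φ y - y) 0) ^ 2) <
      (⨍ y in ellipseE1, ((φ y - y) 1) ^ 2) := by
  classical
  have hπ : (0:ℝ) < Real.pi := Real.pi_pos
  have hs2 : Real.sqrt 3 < 2 := sqrt3_lt_two
  have hp3 : (3:ℝ) < Real.pi := Real.pi_gt_three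
  have hvolr : (volume ellipseE1).toReal = Real.pi := by
    rw [vol_ellipseE1, ENNReal.toReal_ofReal hπ.le]
  have hfin : volume ellipseE1 ≠ ⊤ := by
    rw [vol_ellipseE1]; exact ENNReal.ofReal_ne_top
  have h23nn : (0:ℝ) ≤ 2*Real.pi/3 - Real.sqrt 3/2 := by linarith
  have hvol2r : (volume (ellipseE1 ∩ SB)).toReal = 2*Real.pi/3 - Real.sqrt 3/2 := by
    rw [vol_ellipseE1_inter, ENNReal.toReal_ofReal h23nn]
  have hfin2 : volume (ellipseE1 ∩ SB) ≠ ⊤ := by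
    rw [vol_ellipseE1_inter]; exact ENNReal.ofReal_ne_top
  set f : EucSp 2 → ℝ := fun y => ((φ y - y) 0)^2 with hf
  set g : EucSp 2 → ℝ := fun y => ((φ y - y) 1)^2 with hg
  have hsub : ∀ (u v : EucSp 2) (i : Fin 2), (u - v) i = u i - v i := fun u v i => rfl
  have hφnorm : ∀ y ∈ ellipseE1, ∀ i : Fin 2, (φ y i)^2 < 1 := by
    intro y hy i
    have h := hφmaps y hy
    rw [discE2, Metric.mem_ball, dist_zero_right] at h
    have h2 := coord_sq_le_norm_sq (φ y) i
    nlinarith [norm_nonneg (φ y)]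
  have hEco : ∀ y ∈ ellipseE1, (y 0)^2 < 1/100 ∧ (y 1)^2 < 100 := by
    intro y hy
    have h : (10 * y 0)^2 + (y 1/10)^2 < 1 := hy
    constructor <;> nlinarith [sq_nonneg (y 0), sq_nonneg (y 1)]
  -- pointwise bounds
  have hfb : ∀ y ∈ ellipseE1, f y ≤ 1.21 := by
    intro y hy
    have h1 := hφnorm y hy 0
    have h2 := (hEco y hy).1
    rw [hf]
    simp only [hsub]
    nlinarith [sq_nonneg (φ y 0 + 10 * y 0)]
  have hgb : ∀ y ∈ ellipseE1, g y ≤ 121 := by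
    intro y hy
    have h1 := hφnorm y hy 1
    have h2 := (hEco y hy).2
    rw [hg]
    simp only [hsub]
    nlinarith [sq_nonneg (10 * φ y 1 + y 1)]
  have hglb : ∀ y ∈ ellipseE1 ∩ SB, (16:ℝ) ≤ g y := by
    rintro y ⟨hy, hyB⟩
    have h1 := hφnorm y hy 1
    have hB : (5:ℝ) ≤ |y 1| := hyB
    have ha : |φ y 1| ≤ 1 := by nlinarith [sq_abs (φ y 1), abs_nonneg (φ y 1)]
    have h5 : |y 1| - |φ y 1| ≤ |y 1 - φ y 1| := abs_sub_abs_le_abs_sub _ _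
    have h6 : (4:ℝ) ≤ |φ y 1 - y 1| := by
      rw [abs_sub_comm]; linarith
    rw [hg]
    simp only [hsub]
    nlinarith [sq_abs (φ y 1 - y 1)]
  -- measurability and integrability
  have hmsub : Measurable (fun y : EucSp 2 => φ y - y) := hφmeas.sub measurable_id
  have hmf : Measurable f := ((measurable_coord 0).comp hmsub).pow_const 2
  have hmg : Measurable g := ((measurable_coord 1).comp hmsub).pow_const 2
  have hintf : IntegrableOn f ellipseE1 := by
    apply Measure.integrableOn_of_bounded hfin hmf.aestronglyMeasurable
    rw [ae_restrict_iff' meas_ellipseE1]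
    exact Filter.Eventually.of_forall fun y hy => by
      rw [Real.norm_eq_abs, abs_of_nonneg (sq_nonneg _)]; exact hfb y hy
  have hintg : IntegrableOn g ellipseE1 := by
    apply Measure.integrableOn_of_bounded hfin hmg.aestronglyMeasurable
    rw [ae_restrict_iff' meas_ellipseE1]
    exact Filter.Eventually.of_forall fun y hy => by
      rw [Real.norm_eq_abs, abs_of_nonneg (sq_nonneg _)]; exact hgb y hy
  -- first integral bound
  have hint1 : ∫ y in ellipseE1, f y ≤ 1.21 * Real.pi := by
    have h := setIntegral_mono_on hintf
      (integrableOn_const hfin)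
      meas_ellipseE1 hfb
    rwa [setIntegral_const, measureReal_def, hvolr, smul_eq_mul, mul_comm] at h
  -- second integral bound
  have hint2 : 16 * (2*Real.pi/3 - Real.sqrt 3/2) ≤ ∫ y in ellipseE1, g y := by
    have hmono1 : ∫ y in ellipseE1 ∩ SB, g y ≤ ∫ y in ellipseE1, g y :=
      setIntegral_mono_set hintg (Filter.Eventually.of_forall fun y => sq_nonneg _)
        (HasSubset.Subset.eventuallyLE Set.inter_subset_left)
    have hconst : ∫ y in ellipseE1 ∩ SB, (16:ℝ) ≤ ∫ y in ellipseE1 ∩ SB, g y :=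
      setIntegral_mono_on
        (integrableOn_const hfin2)
        (hintg.mono_set Set.inter_subset_left)
        (meas_ellipseE1.inter meas_SB) hglb
    rw [setIntegral_const, measureReal_def, hvol2r, smul_eq_mul, mul_comm] at hconst
    linarith
  -- averages
  have havg1 : (⨍ y in ellipseE1, ((φ y - y) 0) ^ 2) ≤ 1.21 := by
    rw [setAverage_eq, measureReal_def, hvolr, smul_eq_mul]
    calc Real.pi⁻¹ * ∫ y in ellipseE1, ((φ y - y) 0)^2
        ≤ Real.pi⁻¹ * (1.21 * Real.pi) := by
          apply mul_le_mul_of_nonneg_left hint1 (by positivity)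
      _ = 1.21 := by field_simp
  have havg2 : 16 * (2/3 - Real.sqrt 3/(2*Real.pi))
      ≤ (⨍ y in ellipseE1, ((φ y - y) 1) ^ 2) := by
    rw [setAverage_eq, measureReal_def, hvolr, smul_eq_mul]
    have heqv : Real.pi⁻¹ * (16*(2*Real.pi/3 - Real.sqrt 3/2))
        = 16*(2/3 - Real.sqrt 3/(2*Real.pi)) := by
      field_simp
    calc (16:ℝ) * (2/3 - Real.sqrt 3/(2*Real.pi))
        = Real.pi⁻¹ * (16*(2*Real.pi/3 - Real.sqrt 3/2)) := heqv.symm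
      _ ≤ Real.pi⁻¹ * ∫ y in ellipseE1, ((φ y - y) 1)^2 := by
          apply mul_le_mul_of_nonneg_left hint2 (by positivity)
  -- numeric comparison
  have hnum : (1.21:ℝ) < 16 * (2/3 - Real.sqrt 3/(2*Real.pi)) := by
    have h1 : Real.sqrt 3/(2*Real.pi) ≤ Real.sqrt 3/6 := by
      apply div_le_div_of_nonneg_left (Real.sqrt_nonneg 3) (by norm_num) (by linarith)
    have h2 : Real.sqrt 3/6 < 2/6 := by linarith
    linarith
  exact ⟨havg1, havg2, lt_of_le_of_lt havg1 (lt_of_lt_of_le hnum havg2)⟩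

end
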